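/- arXiv:2605.09814 — 4 statements merged into one kernel-verified Lean document; each statement's English description precedes it below -/
import Mathlib

section
/- If X and Y are independent real-valued random variables, each symmetric about 0 (i.e., -Y has the same distribution as Y, and similarly for X), then E[slack(X,Y)] = E[min(|X|,|Y|)], where slack(a,b) = |a| + |b| - |a+b|. -/
open MeasureTheory ProbabilityTheory

/-- slack(a,b) := |a| + |b| - |a+b|. -/
noncomputable def slack (a b : ℝ) : ℝ := |a| + |b| - |a + b|

lemma slack_key (a b : ℝ) : slack a b + slack a (-b) = 2 * min |a| |b| := by
  simp only [slack, abs_neg, ← sub_eq_add_neg]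
  rcases abs_cases (a + b) with ⟨h1, _⟩ | ⟨h1, _⟩ <;>
    rcases abs_cases (a - b) with ⟨h2, _⟩ | ⟨h2, _⟩ <;>
    rcases abs_cases a with ⟨h3, _⟩ | ⟨h3, _⟩ <;>
    rcases abs_cases b with ⟨h4, _⟩ | ⟨h4, _⟩ <;>
    rcases min_cases |a| |b| with ⟨h5, _⟩ | ⟨h5, _⟩ <;>
    linarith

lemma slack_continuous : Continuous (fun p : ℝ × ℝ => slack p.1 p.2) := by
  unfold slack; fun_prop

theorem expectation_slack_eq_expectation_min
    {Ω : Type*} [MeasurableSpace Ω] (μ : Measure Ω) [IsProbabilityMeasure μ]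
    (X Y : Ω → ℝ) (hXm : Measurable X) (hYm : Measurable Y)
    (hindep : IndepFun X Y μ)
    (hXint : Integrable X μ) (hYint : Integrable Y μ)
    (hXsymm : μ.map X = μ.map (fun ω => -X ω))
    (hYsymm : μ.map Y = μ.map (fun ω => -Y ω)) :
    ∫ ω, slack (X ω) (Y ω) ∂μ = ∫ ω, min |X ω| |Y ω| ∂μ := by
  have hnYm : Measurable fun ω => -Y ω := hYm.neg
  have hindep' : IndepFun X (fun ω => -Y ω) μ := hindep.comp measurable_id measurable_neg
  have hmap1 : μ.map (fun ω => (X ω, Y ω)) = (μ.map X).prod (μ.map Y) :=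
    (indepFun_iff_map_prod_eq_prod_map_map hXm.aemeasurable hYm.aemeasurable).mp hindep
  have hmap2 : μ.map (fun ω => (X ω, -Y ω)) = (μ.map X).prod (μ.map fun ω => -Y ω) :=
    (indepFun_iff_map_prod_eq_prod_map_map hXm.aemeasurable hnYm.aemeasurable).mp hindep'
  have hmaps : μ.map (fun ω => (X ω, Y ω)) = μ.map (fun ω => (X ω, -Y ω)) := by
    rw [hmap1, hmap2, hYsymm]
  -- transfer the integral through the pair maps
  have heq : ∫ ω, slack (X ω) (Y ω) ∂μ = ∫ ω, slack (X ω) (-Y ω) ∂μ := by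
    have h1 : ∫ ω, slack (X ω) (Y ω) ∂μ
        = ∫ p : ℝ × ℝ, slack p.1 p.2 ∂(μ.map (fun ω => (X ω, Y ω))) :=
      (integral_map (hXm.prodMk hYm).aemeasurable
        slack_continuous.aestronglyMeasurable).symm
    have h2 : ∫ p : ℝ × ℝ, slack p.1 p.2 ∂(μ.map (fun ω => (X ω, -Y ω)))
        = ∫ ω, slack (X ω) (-Y ω) ∂μ :=
      integral_map (hXm.prodMk hnYm).aemeasurable
        slack_continuous.aestronglyMeasurable
    rw [h1, hmaps, h2]
  -- integrability
  have hXY : Integrable (fun ω => X ω + Y ω) μ := hXint.add hYint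
  have hXnY : Integrable (fun ω => X ω + -Y ω) μ := hXint.add hYint.neg
  have hint1 : Integrable (fun ω => slack (X ω) (Y ω)) μ := by
    exact (hXint.abs.add hYint.abs).sub hXY.abs
  have hint2 : Integrable (fun ω => slack (X ω) (-Y ω)) μ := by
    exact (hXint.abs.add hYint.neg.abs).sub hXnY.abs
  have hsum : ∫ ω, slack (X ω) (Y ω) ∂μ + ∫ ω, slack (X ω) (-Y ω) ∂μ
      = ∫ ω, 2 * min |X ω| |Y ω| ∂μ := by
    rw [← integral_add hint1 hint2]
    congr 1
    ext ω
    exact slack_key (X ω) (Y ω)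
  rw [integral_const_mul] at hsum
  linarith [hsum, heq]
end

section
/- Let X and Y be independent random variables, where X is a sum of m_X independent Rademacher variables and Y is a sum of m_Y independent Rademacher variables, with m_X, m_Y ≥ m ≥ 1. Let W = min(|X|,|Y|). Then E[W] ≥ (9/512)·√m. -/
open MeasureTheory ProbabilityTheory

/-- The Rademacher distribution on ℝ: uniform on `{-1, +1}`. -/
noncomputable def rademacher : Measure ℝ :=
  (2 : ENNReal)⁻¹ • Measure.dirac (1 : ℝ) + (2 : ENNReal)⁻¹ • Measure.dirac (-1 : ℝ)

lemma integrable_dirac' (f : ℝ → ℝ) (a : ℝ) : Integrable f (Measure.dirac a) := by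
  have h : f =ᵐ[Measure.dirac a] fun _ => f a := by
    rw [Filter.EventuallyEq, ae_dirac_eq]; simp
  exact (integrable_const (f a)).congr h.symm

lemma rademacher_integral (f : ℝ → ℝ) : ∫ x, f x ∂rademacher = (f 1 + f (-1)) / 2 := by
  have h1 : Integrable f ((2 : ENNReal)⁻¹ • Measure.dirac (1 : ℝ)) := by
    rw [integrable_smul_measure (by simp) (by simp)]; exact integrable_dirac' f 1
  have h2 : Integrable f ((2 : ENNReal)⁻¹ • Measure.dirac (-1 : ℝ)) := by
    rw [integrable_smul_measure (by simp) (by simp)]; exact integrable_dirac' f (-1)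
  rw [rademacher, integral_add_measure h1 h2, integral_smul_measure, integral_smul_measure,
    integral_dirac, integral_dirac]
  simp [ENNReal.toReal_inv]; ring

section
variable {Ω : Type*} [MeasurableSpace Ω] {μ : Measure Ω} [IsProbabilityMeasure μ]

omit [IsProbabilityMeasure μ] in
lemma rad_pow (Z : Ω → ℝ) (hZ : Measurable Z) (hd : μ.map Z = rademacher) (k : ℕ) :
    ∫ ω, (Z ω) ^ k ∂μ = if Even k then 1 else 0 := by
  have : ∫ ω, (Z ω) ^ k ∂μ = ∫ x, x ^ k ∂(μ.map Z) := by
    rw [integral_map hZ.aemeasurable (by fun_prop)]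
  rw [this, hd, rademacher_integral]
  rcases Nat.even_or_odd k with h | h
  · simp [h, Even.neg_one_pow h]
  · simp [h, Nat.not_even_iff_odd.2 h, Odd.neg_one_pow h]

omit [IsProbabilityMeasure μ] in
lemma rad_abs_le (Z : Ω → ℝ) (hZ : Measurable Z) (hd : μ.map Z = rademacher) :
    ∀ᵐ ω ∂μ, |Z ω| ≤ 1 := by
  have hms : MeasurableSet {x : ℝ | ¬|x| ≤ 1} :=
    (measurableSet_le measurable_abs measurable_const).compl
  have h : ∀ᵐ x ∂(μ.map Z), |x| ≤ 1 := by
    rw [ae_iff]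
    have hs : (μ.map Z) {x | ¬|x| ≤ 1} = 0 := by
      rw [hd, rademacher]
      have h1 : Measure.dirac (1:ℝ) {x | ¬|x| ≤ 1} = 0 := by
        rw [Measure.dirac_apply' _ hms]
        simp [Set.indicator_apply]
      have h2 : Measure.dirac (-1:ℝ) {x | ¬|x| ≤ 1} = 0 := by
        rw [Measure.dirac_apply' _ hms]
        simp [Set.indicator_apply]
      simp [h1, h2]
    exact hs
  exact (ae_map_iff hZ.aemeasurable (measurableSet_le measurable_abs measurable_const)).1 h

lemma int_of_bound (f : Ω → ℝ) (hf : Measurable f) (C : ℝ) (h : ∀ᵐ ω ∂μ, |f ω| ≤ C) :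
    Integrable f μ :=
  (integrable_const C).mono' hf.aestronglyMeasurable (by simpa [Real.norm_eq_abs] using h)

lemma moments_step (S e : Ω → ℝ) (hS : Measurable S) (he : Measurable e)
    (C : ℝ) (hC : 0 ≤ C) (hSb : ∀ᵐ ω ∂μ, |S ω| ≤ C) (heb : ∀ᵐ ω ∂μ, |e ω| ≤ 1)
    (hind : IndepFun S e μ)
    (hem : ∀ k, ∫ ω, (e ω) ^ k ∂μ = if Even k then 1 else 0)
    (c : ℝ)
    (h1 : ∫ ω, S ω ∂μ = 0) (h2 : ∫ ω, (S ω) ^ 2 ∂μ = c)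
    (h3 : ∫ ω, (S ω) ^ 3 ∂μ = 0) (h4 : ∫ ω, (S ω) ^ 4 ∂μ = 3 * c ^ 2 - 2 * c) :
    (∫ ω, (S ω + e ω) ∂μ = 0) ∧ (∫ ω, (S ω + e ω) ^ 2 ∂μ = c + 1) ∧
    (∫ ω, (S ω + e ω) ^ 3 ∂μ = 0) ∧
    (∫ ω, (S ω + e ω) ^ 4 ∂μ = 3 * (c + 1) ^ 2 - 2 * (c + 1)) := by
  have hint : ∀ p q : ℕ, Integrable (fun ω => (S ω) ^ p * (e ω) ^ q) μ := by
    intro p q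
    apply int_of_bound _ ((hS.pow_const p).mul (he.pow_const q)) (C ^ p)
    filter_upwards [hSb, heb] with ω h1 h2
    simp only [Pi.mul_apply]; rw [abs_mul, abs_pow, abs_pow]
    calc |S ω| ^ p * |e ω| ^ q ≤ C ^ p * 1 ^ q := by
          exact mul_le_mul (pow_le_pow_left₀ (abs_nonneg _) h1 p)
            (pow_le_pow_left₀ (abs_nonneg _) h2 q) (by positivity) (by positivity)
      _ = C ^ p := by ring
  have hcross : ∀ p q : ℕ, ∫ ω, (S ω) ^ p * (e ω) ^ q ∂μ
      = (∫ ω, (S ω) ^ p ∂μ) * (∫ ω, (e ω) ^ q ∂μ) := by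
    intro p q
    exact (hind.comp (measurable_id.pow_const p) (measurable_id.pow_const q)).integral_mul_eq_mul_integral
      (hS.pow_const p).aestronglyMeasurable (he.pow_const q).aestronglyMeasurable
  have hS1 : ∫ ω, (S ω) ^ 1 ∂μ = 0 := by simpa using h1
  refine ⟨?_, ?_, ?_, ?_⟩
  · rw [show (fun ω => S ω + e ω) = fun ω => (S ω) ^ 1 * (e ω) ^ 0 + (S ω) ^ 0 * (e ω) ^ 1
      from funext fun ω => by ring]
    rw [integral_add (hint 1 0) (hint 0 1), hcross, hcross, hS1, hem 1]
    norm_num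
  · rw [show (fun ω => (S ω + e ω) ^ 2)
      = fun ω => (S ω) ^ 2 * (e ω) ^ 0 + (2 * ((S ω) ^ 1 * (e ω) ^ 1) + (S ω) ^ 0 * (e ω) ^ 2)
      from funext fun ω => by ring]
    have i1 : Integrable (fun ω => 2 * (S ω ^ 1 * e ω ^ 1) + S ω ^ 0 * e ω ^ 2) μ :=
      ((hint 1 1).const_mul 2).add (hint 0 2)
    rw [integral_add (hint 2 0) i1]
    rw [integral_add ((hint 1 1).const_mul 2) (hint 0 2), integral_const_mul,
      hcross, hcross, hcross, hS1, h2, hem 0, hem 1, hem 2]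
    norm_num
  · rw [show (fun ω => (S ω + e ω) ^ 3)
      = fun ω => (S ω) ^ 3 * (e ω) ^ 0 + (3 * ((S ω) ^ 2 * (e ω) ^ 1)
        + (3 * ((S ω) ^ 1 * (e ω) ^ 2) + (S ω) ^ 0 * (e ω) ^ 3))
      from funext fun ω => by ring]
    have i1 : Integrable (fun ω => 3 * (S ω ^ 1 * e ω ^ 2) + S ω ^ 0 * e ω ^ 3) μ :=
      ((hint 1 2).const_mul 3).add (hint 0 3)
    have i2 : Integrable (fun ω => 3 * (S ω ^ 2 * e ω ^ 1)
        + (3 * (S ω ^ 1 * e ω ^ 2) + S ω ^ 0 * e ω ^ 3)) μ :=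
      ((hint 2 1).const_mul 3).add i1
    rw [integral_add (hint 3 0) i2]
    rw [integral_add ((hint 2 1).const_mul 3) i1]
    rw [integral_add ((hint 1 2).const_mul 3) (hint 0 3),
      integral_const_mul, integral_const_mul,
      hcross, hcross, hcross, hcross, hS1, h2, h3, hem 0, hem 1, hem 2, hem 3]
    norm_num
  · rw [show (fun ω => (S ω + e ω) ^ 4)
      = fun ω => (S ω) ^ 4 * (e ω) ^ 0 + (4 * ((S ω) ^ 3 * (e ω) ^ 1)
        + (6 * ((S ω) ^ 2 * (e ω) ^ 2) + (4 * ((S ω) ^ 1 * (e ω) ^ 3)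
          + (S ω) ^ 0 * (e ω) ^ 4)))
      from funext fun ω => by ring]
    have i1 : Integrable (fun ω => 4 * (S ω ^ 1 * e ω ^ 3) + S ω ^ 0 * e ω ^ 4) μ :=
      ((hint 1 3).const_mul 4).add (hint 0 4)
    have i2 : Integrable (fun ω => 6 * (S ω ^ 2 * e ω ^ 2)
        + (4 * (S ω ^ 1 * e ω ^ 3) + S ω ^ 0 * e ω ^ 4)) μ :=
      ((hint 2 2).const_mul 6).add i1
    have i3 : Integrable (fun ω => 4 * (S ω ^ 3 * e ω ^ 1)
        + (6 * (S ω ^ 2 * e ω ^ 2) + (4 * (S ω ^ 1 * e ω ^ 3) + S ω ^ 0 * e ω ^ 4))) μ :=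
      ((hint 3 1).const_mul 4).add i2
    rw [integral_add (hint 4 0) i3]
    rw [integral_add ((hint 3 1).const_mul 4) i2]
    rw [integral_add ((hint 2 2).const_mul 6) i1]
    rw [integral_add ((hint 1 3).const_mul 4) (hint 0 4),
      integral_const_mul, integral_const_mul, integral_const_mul,
      hcross, hcross, hcross, hcross, hcross, hS1, h2, h3, h4,
      hem 0, hem 1, hem 2, hem 3, hem 4]
    norm_num
    ring

omit [IsProbabilityMeasure μ] in
lemma sum_bound {n : ℕ} (ε : Fin n → Ω → ℝ) (hmeas : ∀ i, Measurable (ε i))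
    (hdist : ∀ i, μ.map (ε i) = rademacher) (s : Finset (Fin n)) :
    ∀ᵐ ω ∂μ, |∑ i ∈ s, ε i ω| ≤ (s.card : ℝ) := by
  have hb : ∀ᵐ ω ∂μ, ∀ i, |ε i ω| ≤ 1 :=
    ae_all_iff.2 fun i => rad_abs_le _ (hmeas i) (hdist i)
  filter_upwards [hb] with ω hω
  calc |∑ i ∈ s, ε i ω| ≤ ∑ i ∈ s, |ε i ω| := Finset.abs_sum_le_sum_abs _ _
    _ ≤ ∑ _i ∈ s, (1 : ℝ) := Finset.sum_le_sum fun i _ => hω i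
    _ = s.card := by simp

lemma sum_moments {n : ℕ} (ε : Fin n → Ω → ℝ) (hmeas : ∀ i, Measurable (ε i))
    (hdist : ∀ i, μ.map (ε i) = rademacher)
    (hindep : iIndepFun ε μ) (s : Finset (Fin n)) :
    (∫ ω, (∑ i ∈ s, ε i ω) ∂μ = 0) ∧ (∫ ω, (∑ i ∈ s, ε i ω) ^ 2 ∂μ = s.card) ∧
    (∫ ω, (∑ i ∈ s, ε i ω) ^ 3 ∂μ = 0) ∧
    (∫ ω, (∑ i ∈ s, ε i ω) ^ 4 ∂μ = 3 * (s.card : ℝ) ^ 2 - 2 * s.card) := by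
  classical
  induction s using Finset.induction_on with
  | empty => simp
  | @insert a s ha ih =>
    have hSmeas : Measurable (fun ω => ∑ i ∈ s, ε i ω) :=
      Finset.measurable_sum s fun i _ => hmeas i
    have hind : IndepFun (fun ω => ∑ i ∈ s, ε i ω) (ε a) μ := by
      have h := hindep.indepFun_finsetSum_of_notMem hmeas ha
      have he : (∑ j ∈ s, ε j) = fun ω => ∑ j ∈ s, ε j ω := by
        funext ω; simp [Finset.sum_apply]
      rwa [he] at h
    have key := moments_step (fun ω => ∑ i ∈ s, ε i ω) (ε a) hSmeas (hmeas a)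
      (s.card : ℝ) (by positivity) (sum_bound ε hmeas hdist s)
      (rad_abs_le _ (hmeas a) (hdist a)) hind (rad_pow _ (hmeas a) (hdist a))
      (s.card : ℝ) ih.1 ih.2.1 ih.2.2.1 ih.2.2.2
    have hrw : ∀ ω, ∑ i ∈ insert a s, ε i ω = (∑ i ∈ s, ε i ω) + ε a ω := by
      intro ω; rw [Finset.sum_insert ha]; ring
    have hc : ((insert a s).card : ℝ) = (s.card : ℝ) + 1 := by
      rw [Finset.card_insert_of_notMem ha]; push_cast; ring
    simp only [hrw, hc]
    exact key

lemma anti_conc (n : ℕ) (hn : 1 ≤ n) (X : Ω → ℝ) (hX : Measurable X)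
    (hb : ∀ᵐ ω ∂μ, |X ω| ≤ (n : ℝ)) (h2 : ∫ ω, (X ω) ^ 2 ∂μ = n)
    (h4 : ∫ ω, (X ω) ^ 4 ∂μ = 3 * (n : ℝ) ^ 2 - 2 * n) :
    (3 / 16 : ℝ) ≤ ∫ ω, (if (n : ℝ) / 4 ≤ (X ω) ^ 2 then (1 : ℝ) else 0) ∂μ := by
  have hn' : (1 : ℝ) ≤ (n : ℝ) := by exact_mod_cast hn
  have hn0 : (0 : ℝ) < n := by linarith
  have hmsφ : MeasurableSet {x : ℝ | (n : ℝ) / 4 ≤ x ^ 2} :=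
    measurableSet_le measurable_const (measurable_id.pow_const 2)
  have hφmeas : Measurable (fun x : ℝ => if (n : ℝ) / 4 ≤ x ^ 2 then (1 : ℝ) else 0) :=
    Measurable.ite hmsφ measurable_const measurable_const
  set φ : Ω → ℝ := fun ω => if (n : ℝ) / 4 ≤ (X ω) ^ 2 then (1 : ℝ) else 0 with hφ
  have hφm : Measurable φ := hφmeas.comp hX
  have hφb : ∀ ω, |φ ω| ≤ 1 := by
    intro ω; rw [hφ]; dsimp only; split <;> norm_num
  have hφnn : ∀ ω, 0 ≤ φ ω := by
    intro ω; rw [hφ]; dsimp only; split <;> norm_num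
  have hiφ : Integrable φ μ := int_of_bound φ hφm 1 (ae_of_all μ hφb)
  have hi2 : Integrable (fun ω => (X ω) ^ 2) μ := by
    apply int_of_bound _ (hX.pow_const 2) ((n : ℝ) ^ 2)
    filter_upwards [hb] with ω h
    rw [abs_pow]; exact pow_le_pow_left₀ (abs_nonneg _) h 2
  have hi4 : Integrable (fun ω => (X ω) ^ 4) μ := by
    apply int_of_bound _ (hX.pow_const 4) ((n : ℝ) ^ 4)
    filter_upwards [hb] with ω h
    rw [abs_pow]; exact pow_le_pow_left₀ (abs_nonneg _) h 4
  have hi2φ : Integrable (fun ω => (X ω) ^ 2 * φ ω) μ := by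
    apply int_of_bound _ ((hX.pow_const 2).mul hφm) ((n : ℝ) ^ 2)
    filter_upwards [hb] with ω h
    simp only [Pi.mul_apply]; rw [abs_mul, abs_pow]
    calc |X ω| ^ 2 * |φ ω| ≤ (n : ℝ) ^ 2 * 1 :=
          mul_le_mul (pow_le_pow_left₀ (abs_nonneg _) h 2) (hφb ω) (abs_nonneg _)
            (by positivity)
      _ = (n : ℝ) ^ 2 := by ring
  have stepA : (n : ℝ) ≤ (∫ ω, (X ω) ^ 2 * φ ω ∂μ) + (n : ℝ) / 4 := by
    have hpt : ∀ ω, (X ω) ^ 2 ≤ (X ω) ^ 2 * φ ω + (n : ℝ) / 4 := by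
      intro ω
      rw [hφ]; dsimp only
      by_cases h : (n : ℝ) / 4 ≤ (X ω) ^ 2
      · rw [if_pos h]; nlinarith
      · rw [if_neg h]; push_neg at h; nlinarith
    have := integral_mono hi2 (hi2φ.add (integrable_const ((n : ℝ) / 4))) hpt
    simp only [Pi.add_apply] at this
    rwa [h2, integral_add hi2φ (integrable_const _), integral_const, probReal_univ,
      one_smul] at this
  have stepB : (∫ ω, (X ω) ^ 2 * φ ω ∂μ)
      ≤ 3 * (n : ℝ) / 8 + 2 * n * ∫ ω, φ ω ∂μ := by
    have hpt : ∀ ω, (X ω) ^ 2 * φ ω ≤ (X ω) ^ 4 / (8 * n) + 2 * n * φ ω := by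
      intro ω
      rw [hφ]; dsimp only
      by_cases h : (n : ℝ) / 4 ≤ (X ω) ^ 2
      · rw [if_pos h]
        have hsq : 0 ≤ ((X ω) ^ 2 - 4 * n) ^ 2 := sq_nonneg _
        have hdiv : (X ω) ^ 2 - 2 * n ≤ (X ω) ^ 4 / (8 * n) := by
          rw [le_div_iff₀ (by positivity : (0:ℝ) < 8 * n)]
          nlinarith
        linarith
      · rw [if_neg h]
        simp only [mul_zero, add_zero, zero_mul]
        positivity
    have := integral_mono hi2φ ((hi4.div_const (8 * n)).add (hiφ.const_mul (2 * n))) hpt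
    simp only [Pi.add_apply] at this
    have heq : ∫ ω, ((X ω) ^ 4 / (8 * n) + 2 * n * φ ω) ∂μ
        = (3 * (n : ℝ) ^ 2 - 2 * n) / (8 * n) + 2 * n * ∫ ω, φ ω ∂μ := by
      rw [integral_add (hi4.div_const (8 * n)) (hiφ.const_mul (2 * n)),
        integral_div, h4, integral_const_mul]
    rw [heq] at this
    have hle : (3 * (n : ℝ) ^ 2 - 2 * n) / (8 * n) ≤ 3 * n / 8 := by
      rw [div_le_div_iff₀ (by positivity) (by norm_num)]
      nlinarith
    linarith
  have h2n : (0 : ℝ) < 2 * n := by positivity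
  nlinarith [stepA, stepB]

end

theorem min_abs_of_independent_rademacher_sums
    {Ω : Type*} [MeasurableSpace Ω] (μ : Measure Ω) [IsProbabilityMeasure μ]
    (m mX mY : ℕ) (hm : 1 ≤ m) (hmX : m ≤ mX) (hmY : m ≤ mY)
    (ε : Fin mX → Ω → ℝ) (δ : Fin mY → Ω → ℝ)
    (hεmeas : ∀ i, Measurable (ε i)) (hδmeas : ∀ j, Measurable (δ j))
    (hεdist : ∀ i, μ.map (ε i) = rademacher)
    (hδdist : ∀ j, μ.map (δ j) = rademacher)
    (hεindep : iIndepFun ε μ)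
    (hδindep : iIndepFun δ μ)
    (hXY : IndepFun (fun ω => ∑ i, ε i ω) (fun ω => ∑ j, δ j ω) μ) :
    (9 / 512 : ℝ) * Real.sqrt m ≤
      ∫ ω, min |∑ i, ε i ω| |∑ j, δ j ω| ∂μ := by
  have hmX1 : 1 ≤ mX := le_trans hm hmX
  have hmY1 : 1 ≤ mY := le_trans hm hmY
  set X : Ω → ℝ := fun ω => ∑ i, ε i ω with hXdef
  set Y : Ω → ℝ := fun ω => ∑ j, δ j ω with hYdef
  have hXmeas : Measurable X := Finset.measurable_sum _ fun i _ => hεmeas i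
  have hYmeas : Measurable Y := Finset.measurable_sum _ fun j _ => hδmeas j
  have hcardX : ((Finset.univ : Finset (Fin mX)).card : ℝ) = (mX : ℝ) := by simp
  have hcardY : ((Finset.univ : Finset (Fin mY)).card : ℝ) = (mY : ℝ) := by simp
  have hXmom := sum_moments ε hεmeas hεdist hεindep Finset.univ
  have hYmom := sum_moments δ hδmeas hδdist hδindep Finset.univ
  rw [hcardX] at hXmom
  rw [hcardY] at hYmom
  have hXb : ∀ᵐ ω ∂μ, |X ω| ≤ (mX : ℝ) := by
    have := sum_bound ε hεmeas hεdist Finset.univ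
    rwa [hcardX] at this
  have hYb : ∀ᵐ ω ∂μ, |Y ω| ≤ (mY : ℝ) := by
    have := sum_bound δ hδmeas hδdist Finset.univ
    rwa [hcardY] at this
  have pX := anti_conc mX hmX1 X hXmeas hXb hXmom.2.1 hXmom.2.2.2
  have pY := anti_conc mY hmY1 Y hYmeas hYb hYmom.2.1 hYmom.2.2.2
  set φX : ℝ → ℝ := fun x => if (mX : ℝ) / 4 ≤ x ^ 2 then (1 : ℝ) else 0 with hφXdef
  set φY : ℝ → ℝ := fun x => if (mY : ℝ) / 4 ≤ x ^ 2 then (1 : ℝ) else 0 with hφYdef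
  have hφXmeas : Measurable φX :=
    Measurable.ite (measurableSet_le measurable_const (measurable_id.pow_const 2))
      measurable_const measurable_const
  have hφYmeas : Measurable φY :=
    Measurable.ite (measurableSet_le measurable_const (measurable_id.pow_const 2))
      measurable_const measurable_const
  have hφXb : ∀ x, |φX x| ≤ 1 := by
    intro x; rw [hφXdef]; dsimp only; split <;> norm_num
  have hφYb : ∀ x, |φY x| ≤ 1 := by
    intro x; rw [hφYdef]; dsimp only; split <;> norm_num
  -- pointwise bound
  have hs4 : Real.sqrt 4 = 2 := by
    rw [show (4 : ℝ) = 2 ^ 2 by norm_num, Real.sqrt_sq (by norm_num)]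
  have hpt : ∀ ω, Real.sqrt m / 2 * (φX (X ω) * φY (Y ω)) ≤ min |X ω| |Y ω| := by
    intro ω
    by_cases hx : (mX : ℝ) / 4 ≤ (X ω) ^ 2
    · by_cases hy : (mY : ℝ) / 4 ≤ (Y ω) ^ 2
      · have hφX1 : φX (X ω) = 1 := if_pos hx
        have hφY1 : φY (Y ω) = 1 := if_pos hy
        rw [hφX1, hφY1, mul_one, mul_one]
        have key : ∀ (k n : ℕ) (z : ℝ), m ≤ n → ((n : ℝ) / 4 ≤ z ^ 2) →
            Real.sqrt m / 2 ≤ |z| := by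
          intro k n z hmn hz
          have h1 : ((m : ℝ)) / 4 ≤ z ^ 2 := by
            have : (m : ℝ) ≤ n := by exact_mod_cast hmn
            linarith
          calc Real.sqrt m / 2 = Real.sqrt ((m : ℝ) / 4) := by
                rw [Real.sqrt_div (by positivity : (0:ℝ) ≤ (m:ℝ)) 4, hs4]
            _ ≤ Real.sqrt (z ^ 2) := Real.sqrt_le_sqrt h1
            _ = |z| := Real.sqrt_sq_eq_abs z
        exact le_min (key 0 mX (X ω) hmX hx) (key 0 mY (Y ω) hmY hy)
      · have : φY (Y ω) = 0 := if_neg hy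
        rw [this, mul_zero, mul_zero]
        exact le_min (abs_nonneg _) (abs_nonneg _)
    · have : φX (X ω) = 0 := if_neg hx
      rw [this, zero_mul, mul_zero]
      exact le_min (abs_nonneg _) (abs_nonneg _)
  -- integrability
  have hiLHS : Integrable (fun ω => Real.sqrt m / 2 * (φX (X ω) * φY (Y ω))) μ := by
    apply int_of_bound _
      (measurable_const.mul ((hφXmeas.comp hXmeas).mul (hφYmeas.comp hYmeas)))
      (Real.sqrt m / 2)
    apply ae_of_all
    intro ω
    simp only [Pi.mul_apply, Function.comp_apply]; rw [abs_mul, abs_mul]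
    have h0 : |Real.sqrt ↑m / 2| = Real.sqrt ↑m / 2 := abs_of_nonneg (by positivity)
    rw [h0]
    calc Real.sqrt ↑m / 2 * (|φX (X ω)| * |φY (Y ω)|)
        ≤ Real.sqrt ↑m / 2 * (1 * 1) := by
          apply mul_le_mul_of_nonneg_left _ (by positivity)
          exact mul_le_mul (hφXb _) (hφYb _) (abs_nonneg _) (by norm_num)
      _ = Real.sqrt ↑m / 2 := by ring
  have hiMin : Integrable (fun ω => min |X ω| |Y ω|) μ := by
    apply int_of_bound _ (hXmeas.abs.min hYmeas.abs) (mX : ℝ)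
    filter_upwards [hXb] with ω h
    rw [abs_of_nonneg (le_min (abs_nonneg _) (abs_nonneg _))]
    exact le_trans (min_le_left _ _) h
  -- product of integrals
  have hprod : ∫ ω, φX (X ω) * φY (Y ω) ∂μ
      = (∫ ω, φX (X ω) ∂μ) * ∫ ω, φY (Y ω) ∂μ := by
    have h := (hXY.comp hφXmeas hφYmeas).integral_mul_eq_mul_integral
      ((hφXmeas.comp hXmeas).aestronglyMeasurable)
      ((hφYmeas.comp hYmeas).aestronglyMeasurable)
    simpa [Function.comp] using h
  calc (9 / 512 : ℝ) * Real.sqrt m = Real.sqrt m / 2 * (3 / 16 * (3 / 16)) := by ring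
    _ ≤ Real.sqrt m / 2 * ((∫ ω, φX (X ω) ∂μ) * ∫ ω, φY (Y ω) ∂μ) := by
        apply mul_le_mul_of_nonneg_left _ (by positivity)
        exact mul_le_mul pX pY (by norm_num) (le_trans (by norm_num) pX)
    _ = ∫ ω, Real.sqrt m / 2 * (φX (X ω) * φY (Y ω)) ∂μ := by
        rw [integral_const_mul, hprod]
    _ ≤ ∫ ω, min |X ω| |Y ω| ∂μ := integral_mono hiLHS hiMin hpt
end

section
/- Let S, T ⊆ [n] with 0 < |S| < n and 0 < ε < 1/4. If the fraction of edges of the complete bipartite graph between S and [n]\S that are cut by the partition (T, [n]\T) is at least 1-ε, then the normalized Hamming distance between the indicator vectors 1_S and 1_T satisfies either d(1_S,1_T) ≤ 2ε or d(1_S,1_T) ≥ 1-2ε. -/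
theorem real_arith (s m a b ε N : ℝ) (hs : 0 < s) (hm : 0 < m) (hn : s + m = N)
    (ha0 : 0 ≤ a) (hb0 : 0 ≤ b) (has : a ≤ s) (hbm : b ≤ m)
    (hε0 : 0 < ε) (hε1 : ε < 1 / 4)
    (hkey : (1 - ε) * (s * m) ≤ (s - a) * (m - b) + a * b) :
    (a + b) / N ≤ 2 * ε ∨ 1 - 2 * ε ≤ (a + b) / N := by
  have hNpos : 0 < N := by linarith
  have hE : 0 ≤ ε * (s * m) - a * m - s * b + 2 * (a * b) := by nlinarith [hkey]
  rcases le_or_gt (2 * a) s with hA | hA <;> rcases le_or_gt (2 * b) m with hB | hB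
  · left
    rw [div_le_iff₀ hNpos, ← hn]
    nlinarith [mul_pos hs hm,
      mul_nonneg (by linarith : (0:ℝ) ≤ s + m) hE,
      mul_nonneg (mul_nonneg (by linarith : (0:ℝ) ≤ s + m) ha0) (by linarith : (0:ℝ) ≤ m - 2*b),
      mul_nonneg (mul_nonneg (by linarith : (0:ℝ) ≤ s + m) hb0) (by linarith : (0:ℝ) ≤ s - 2*a),
      mul_nonneg (mul_nonneg ha0 hm.le) hm.le,
      mul_nonneg (mul_nonneg hb0 hs.le) hs.le]
  · exfalso
    nlinarith [mul_pos hs hm,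
      mul_nonneg ha0 (by linarith : (0:ℝ) ≤ m - b),
      mul_nonneg (by linarith : (0:ℝ) ≤ 2*b - m) (by linarith : (0:ℝ) ≤ s - 2*a)]
  · exfalso
    nlinarith [mul_pos hs hm,
      mul_nonneg hb0 (by linarith : (0:ℝ) ≤ s - a),
      mul_nonneg (by linarith : (0:ℝ) ≤ 2*a - s) (by linarith : (0:ℝ) ≤ m - 2*b)]
  · right
    rw [le_div_iff₀ hNpos, ← hn]
    nlinarith [mul_pos hs hm,
      mul_nonneg (by linarith : (0:ℝ) ≤ s + m) hE,
      mul_nonneg (mul_nonneg (by linarith : (0:ℝ) ≤ s + m) (by linarith : (0:ℝ) ≤ s - a)) (by linarith : (0:ℝ) ≤ 2*b - m),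
      mul_nonneg (mul_nonneg (by linarith : (0:ℝ) ≤ s + m) (by linarith : (0:ℝ) ≤ m - b)) (by linarith : (0:ℝ) ≤ 2*a - s),
      mul_nonneg (mul_nonneg (by linarith : (0:ℝ) ≤ s - a) hm.le) hm.le,
      mul_nonneg (mul_nonneg (by linarith : (0:ℝ) ≤ m - b) hs.le) hs.le]

open Classical in
theorem bip_cut_close_implies_hamming (n : ℕ) (S T : Finset (Fin n)) (ε : ℝ)
    (hS0 : 0 < S.card) (hSn : S.card < n) (hε0 : 0 < ε) (hε1 : ε < 1 / 4)
    (hval : 1 - ε ≤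
      (((S ×ˢ Sᶜ).filter fun uv => ¬((uv.1 ∈ T) ↔ (uv.2 ∈ T))).card : ℝ) /
        (S.card * Sᶜ.card)) :
    (((S \ T).card + (Sᶜ ∩ T).card : ℝ) / n ≤ 2 * ε) ∨
    (1 - 2 * ε ≤ ((S \ T).card + (Sᶜ ∩ T).card : ℝ) / n) := by
  classical
  have hset : ((S ×ˢ Sᶜ).filter fun uv => ¬((uv.1 ∈ T) ↔ (uv.2 ∈ T)))
      = ((S ∩ T) ×ˢ (Sᶜ \ T)) ∪ ((S \ T) ×ˢ (Sᶜ ∩ T)) := by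
    ext ⟨u, v⟩
    simp only [Finset.mem_filter, Finset.mem_product, Finset.mem_union,
      Finset.mem_inter, Finset.mem_sdiff]
    tauto
  have hdisj : Disjoint ((S ∩ T) ×ˢ (Sᶜ \ T)) ((S \ T) ×ˢ (Sᶜ ∩ T)) := by
    rw [Finset.disjoint_left]
    rintro ⟨u, v⟩ h1 h2
    simp only [Finset.mem_product, Finset.mem_inter, Finset.mem_sdiff] at h1 h2
    tauto
  have hcard : ((S ×ˢ Sᶜ).filter fun uv => ¬((uv.1 ∈ T) ↔ (uv.2 ∈ T))).card
      = (S ∩ T).card * (Sᶜ \ T).card + (S \ T).card * (Sᶜ ∩ T).card := by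
    rw [hset, Finset.card_union_of_disjoint hdisj, Finset.card_product,
      Finset.card_product]
  have h1 : (S ∩ T).card + (S \ T).card = S.card := S.card_inter_add_card_sdiff T
  have h2 : (Sᶜ ∩ T).card + (Sᶜ \ T).card = Sᶜ.card := Sᶜ.card_inter_add_card_sdiff T
  have hnm : S.card + Sᶜ.card = n := by simpa using S.card_add_card_compl
  have hIS : ((S ∩ T).card : ℝ) = (S.card : ℝ) - ((S \ T).card : ℝ) := by
    have : ((S ∩ T).card : ℝ) + ((S \ T).card : ℝ) = (S.card : ℝ) := by exact_mod_cast h1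
    linarith
  have hCS : ((Sᶜ \ T).card : ℝ) = (Sᶜ.card : ℝ) - ((Sᶜ ∩ T).card : ℝ) := by
    have : ((Sᶜ ∩ T).card : ℝ) + ((Sᶜ \ T).card : ℝ) = (Sᶜ.card : ℝ) := by exact_mod_cast h2
    linarith
  have hn : (S.card : ℝ) + (Sᶜ.card : ℝ) = (n : ℝ) := by exact_mod_cast hnm
  have hs : (0 : ℝ) < S.card := by exact_mod_cast hS0
  have hm : (0 : ℝ) < Sᶜ.card := by
    have : 0 < Sᶜ.card := by omega
    exact_mod_cast this
  have has : ((S \ T).card : ℝ) ≤ (S.card : ℝ) := by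
    exact_mod_cast Finset.card_le_card (S.sdiff_subset (t := T))
  have hbm : ((Sᶜ ∩ T).card : ℝ) ≤ (Sᶜ.card : ℝ) := by
    exact_mod_cast Finset.card_le_card (Finset.inter_subset_left (s₁ := Sᶜ) (s₂ := T))
  have hkey : (1 - ε) * ((S.card : ℝ) * (Sᶜ.card : ℝ)) ≤
      ((S.card : ℝ) - ((S \ T).card : ℝ)) * ((Sᶜ.card : ℝ) - ((Sᶜ ∩ T).card : ℝ))
        + ((S \ T).card : ℝ) * ((Sᶜ ∩ T).card : ℝ) := by
    rw [hcard] at hval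
    push_cast at hval
    rw [hIS, hCS] at hval
    have hsm : (0 : ℝ) < (S.card : ℝ) * (Sᶜ.card : ℝ) := mul_pos hs hm
    calc (1 - ε) * ((S.card : ℝ) * (Sᶜ.card : ℝ))
        ≤ (((S.card : ℝ) - ((S \ T).card : ℝ)) * ((Sᶜ.card : ℝ) - ((Sᶜ ∩ T).card : ℝ))
            + ((S \ T).card : ℝ) * ((Sᶜ ∩ T).card : ℝ)) / ((S.card : ℝ) * (Sᶜ.card : ℝ))
            * ((S.card : ℝ) * (Sᶜ.card : ℝ)) :=
          mul_le_mul_of_nonneg_right hval hsm.le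
      _ = _ := by field_simp
  exact real_arith (S.card : ℝ) (Sᶜ.card : ℝ) ((S \ T).card : ℝ) ((Sᶜ ∩ T).card : ℝ) ε (n : ℝ)
    hs hm hn (by positivity) (by positivity) has hbm hε0 hε1 hkey
end

section
/- Let G be a graph whose connected components are exactly one 4-cycle C (on vertex set 𝒞 with 4 vertices) together with components that are each either a single edge or a path on 4 vertices (length-3 path). Then for every nonempty vertex subset S with S ≠ 𝒞, the density den(S) := |E(G[S])|/|S| satisfies den(S) ≤ 7/8, while den(𝒞) = 1. -/
open SimpleGraph

namespace DensityAux

instance (n : ℕ) : DecidableRel (pathGraph n).Adj := fun _ _ =>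
  decidable_of_iff _ pathGraph_adj.symm

lemma cyc4_tf : ∀ x y z : Fin 4, (cycleGraph 4).Adj x y → (cycleGraph 4).Adj x z →
    (cycleGraph 4).Adj y z → False := by decide

lemma p4_tf : ∀ x y z : Fin 4, (pathGraph 4).Adj x y → (pathGraph 4).Adj x z →
    (pathGraph 4).Adj y z → False := by decide

lemma p2_tf : ∀ x y z : Fin 2, (pathGraph 2).Adj x y → (pathGraph 2).Adj x z →
    (pathGraph 2).Adj y z → False := by decide

lemma cyc4_edges : (cycleGraph 4).edgeFinset.card = 4 := by decide
lemma p4_edges : (pathGraph 4).edgeFinset.card = 3 := by decide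
lemma p2_edges : (pathGraph 2).edgeFinset.card = 1 := by decide

variable {V : Type*} {G : SimpleGraph V}

lemma mem_pair_sym2 [DecidableEq V] {x y z w : V} (hzw : z ≠ w)
    (hz : z ∈ ({x, y} : Finset V))
    (hw : w ∈ ({x, y} : Finset V)) : s(z, w) = s(x, y) := by
  simp only [Finset.mem_insert, Finset.mem_singleton] at hz hw
  rcases hz with rfl | rfl <;> rcases hw with rfl | rfl
  · exact absurd rfl hzw
  · rfl
  · exact Sym2.eq_swap
  · exact absurd rfl hzw

lemma fE_zero [Fintype G.edgeSet] {T : Finset V}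
    [DecidablePred (fun e : Sym2 V => ∀ v ∈ e, v ∈ T)] (hT : T.card ≤ 1) :
    (G.edgeFinset.filter fun e => ∀ v ∈ e, v ∈ T).card = 0 := by
  classical
  rw [Finset.card_eq_zero, Finset.filter_eq_empty_iff]
  intro e he
  rw [mem_edgeFinset] at he
  induction e using Sym2.ind with
  | _ x y =>
    intro hmem
    have hx : x ∈ T := hmem x (Sym2.mem_mk_left x y)
    have hy : y ∈ T := hmem y (Sym2.mem_mk_right x y)
    have hne : x ≠ y := (G.mem_edgeSet.mp he).ne
    have hsub : ({x, y} : Finset V) ⊆ T := by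
      intro v hv
      simp only [Finset.mem_insert, Finset.mem_singleton] at hv
      rcases hv with rfl | rfl <;> assumption
    have := Finset.card_le_card hsub
    rw [Finset.card_pair hne] at this
    omega

lemma fE_two [Fintype G.edgeSet] {T : Finset V}
    [DecidablePred (fun e : Sym2 V => ∀ v ∈ e, v ∈ T)] (hT : T.card ≤ 2) :
    (G.edgeFinset.filter fun e => ∀ v ∈ e, v ∈ T).card ≤ 1 := by
  classical
  rw [Finset.card_le_one]
  intro a ha b hb
  rw [Finset.mem_filter, mem_edgeFinset] at ha hb
  obtain ⟨hae, hav⟩ := ha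
  obtain ⟨hbe, hbv⟩ := hb
  induction a using Sym2.ind with
  | _ x y =>
    induction b using Sym2.ind with
    | _ z w =>
      have hxy : x ≠ y := (G.mem_edgeSet.mp hae).ne
      have hzw : z ≠ w := (G.mem_edgeSet.mp hbe).ne
      have hx : x ∈ T := hav x (Sym2.mem_mk_left x y)
      have hy : y ∈ T := hav y (Sym2.mem_mk_right x y)
      have hz : z ∈ T := hbv z (Sym2.mem_mk_left z w)
      have hw : w ∈ T := hbv w (Sym2.mem_mk_right z w)
      have hsub : ({x, y} : Finset V) ⊆ T := by
        intro v hv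
        simp only [Finset.mem_insert, Finset.mem_singleton] at hv
        rcases hv with rfl | rfl <;> assumption
      have hTeq : ({x, y} : Finset V) = T := by
        apply Finset.eq_of_subset_of_card_le hsub
        rw [Finset.card_pair hxy]
        exact hT
      rw [← hTeq] at hz hw
      exact (mem_pair_sym2 hzw hz hw).symm

lemma fE_three [Fintype G.edgeSet]
    (htf : ∀ a b c : V, G.Adj a b → G.Adj a c → G.Adj b c → False) {T : Finset V}
    [DecidablePred (fun e : Sym2 V => ∀ v ∈ e, v ∈ T)] (hT : T.card ≤ 3) :
    (G.edgeFinset.filter fun e => ∀ v ∈ e, v ∈ T).card ≤ 2 := by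
  classical
  rcases le_or_gt T.card 2 with h | h
  · exact le_trans (fE_two h) (by norm_num)
  have h3 : T.card = 3 := le_antisymm hT h
  obtain ⟨a, b, c, hab, hac, hbc, rfl⟩ := Finset.card_eq_three.mp h3
  by_contra hcon
  push_neg at hcon
  set R : Finset (Sym2 V) := {s(a, b), s(a, c), s(b, c)} with hR
  have hsub : (G.edgeFinset.filter fun e => ∀ v ∈ e, v ∈ ({a, b, c} : Finset V)) ⊆ R := by
    intro e he
    rw [Finset.mem_filter, mem_edgeFinset] at he
    obtain ⟨hee, hev⟩ := he
    induction e using Sym2.ind with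
    | _ x y =>
      have hxy : x ≠ y := (G.mem_edgeSet.mp hee).ne
      have hx : x ∈ ({a, b, c} : Finset V) := hev x (Sym2.mem_mk_left x y)
      have hy : y ∈ ({a, b, c} : Finset V) := hev y (Sym2.mem_mk_right x y)
      simp only [Finset.mem_insert, Finset.mem_singleton] at hx hy
      simp only [hR, Finset.mem_insert, Finset.mem_singleton]
      rcases hx with rfl | rfl | rfl <;> rcases hy with rfl | rfl | rfl <;>
        simp_all [Sym2.eq_swap]
  have hRcard : R.card ≤ 3 := by
    apply le_trans (Finset.card_insert_le _ _)
    have : ({s(a, c), s(b, c)} : Finset (Sym2 V)).card ≤ 2 := by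
      apply le_trans (Finset.card_insert_le _ _)
      simp
    omega
  have hFR : (G.edgeFinset.filter fun e => ∀ v ∈ e, v ∈ ({a, b, c} : Finset V)) = R :=
    Finset.eq_of_subset_of_card_le hsub (by omega)
  have hmemadj : ∀ x y : V, s(x, y) ∈ R → G.Adj x y := by
    intro x y hxy
    rw [← hFR, Finset.mem_filter, mem_edgeFinset] at hxy
    exact G.mem_edgeSet.mp hxy.1
  exact htf a b c (hmemadj a b (by simp [hR])) (hmemadj a c (by simp [hR]))
    (hmemadj b c (by simp [hR]))

lemma fE_induce [Fintype G.edgeSet] (s : Set V) [Fintype s]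
    [Fintype (G.induce s).edgeSet] {T : Finset V}
    [DecidablePred (fun e : Sym2 V => ∀ v ∈ e, v ∈ T)]
    (hT : ∀ v : V, v ∈ T ↔ v ∈ s) :
    (G.edgeFinset.filter fun e => ∀ v ∈ e, v ∈ T).card =
      (G.induce s).edgeFinset.card := by
  classical
  symm
  apply Finset.card_bij (fun e _ => Sym2.map Subtype.val e)
  · intro e he
    rw [mem_edgeFinset] at he
    induction e using Sym2.ind with
    | _ x y =>
      have hadj : (G.induce s).Adj x y := (SimpleGraph.mem_edgeSet _).mp he
      have hadj' : G.Adj x.val y.val := hadj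
      rw [Sym2.map_pair_eq, Finset.mem_filter, mem_edgeFinset]
      refine ⟨(SimpleGraph.mem_edgeSet G).mpr hadj', ?_⟩
      intro v hv
      rw [Sym2.mem_iff] at hv
      rcases hv with rfl | rfl
      · exact (hT _).mpr x.2
      · exact (hT _).mpr y.2
  · intro e1 _ e2 _ heq
    exact Sym2.map.injective Subtype.val_injective heq
  · intro e he
    rw [Finset.mem_filter, mem_edgeFinset] at he
    obtain ⟨hee, hev⟩ := he
    induction e using Sym2.ind with
    | _ x y =>
      have hx : x ∈ s := (hT _).mp (hev x (Sym2.mem_mk_left x y))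
      have hy : y ∈ s := (hT _).mp (hev y (Sym2.mem_mk_right x y))
      have hadj : G.Adj x y := (SimpleGraph.mem_edgeSet G).mp hee
      refine ⟨s(⟨x, hx⟩, ⟨y, hy⟩), ?_, ?_⟩
      · rw [mem_edgeFinset]
        exact hadj
      · rw [Sym2.map_pair_eq]

lemma no_tri {s : Set V} {n : ℕ} {H : SimpleGraph (Fin n)}
    (hH : ∀ x y z : Fin n, H.Adj x y → H.Adj x z → H.Adj y z → False)
    (φ : G.induce s ≃g H) {a b c : V} (ha : a ∈ s) (hb : b ∈ s) (hc : c ∈ s)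
    (hab : G.Adj a b) (hac : G.Adj a c) (hbc : G.Adj b c) : False := by
  have h1 : (G.induce s).Adj ⟨a, ha⟩ ⟨b, hb⟩ := hab
  have h2 : (G.induce s).Adj ⟨a, ha⟩ ⟨c, hc⟩ := hac
  have h3 : (G.induce s).Adj ⟨b, hb⟩ ⟨c, hc⟩ := hbc
  exact hH _ _ _ (φ.map_adj_iff.mpr h1) (φ.map_adj_iff.mpr h2) (φ.map_adj_iff.mpr h3)

lemma bound34 [Fintype G.edgeSet]
    (htf : ∀ a b c : V, G.Adj a b → G.Adj a c → G.Adj b c → False) {T : Finset V}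
    [DecidablePred (fun e : Sym2 V => ∀ v ∈ e, v ∈ T)] (hT : T.card ≤ 4)
    (hfull : T.card = 4 → (G.edgeFinset.filter fun e => ∀ v ∈ e, v ∈ T).card ≤ 3) :
    4 * (G.edgeFinset.filter fun e => ∀ v ∈ e, v ∈ T).card ≤ 3 * T.card := by
  rcases lt_or_ge T.card 4 with h4 | h4
  · rcases le_or_gt T.card 2 with h2 | h2
    · rcases le_or_gt T.card 1 with h1 | h1
      · rw [fE_zero h1]; omega
      · have := fE_two (G := G) h2; omega
    · have := fE_three htf (T := T) (by omega); omega
  · have hc4 : T.card = 4 := le_antisymm hT h4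
    have := hfull hc4; omega

lemma arith (F n : ℕ) (h1 : 4 * F ≤ 3 * n + 4) (h2 : 5 ≤ n) : 8 * F ≤ 7 * n := by
  rcases le_or_gt 8 n with h | h
  · omega
  · interval_cases n <;> omega

end DensityAux

open SimpleGraph in
open Classical in
/-- If the connected components of `G` consist of exactly one 4-cycle (on vertex
set `𝒞`), with every other component a single edge or a path on 4 vertices, then
`𝒞` has density 1 and every other nonempty vertex subset has density at most 7/8.
Here the density of `S` is the number of edges with both endpoints in `S`, divided
by `|S|`. -/
theorem density_of_square_plus_edges_and_paths
    {V : Type*} [Fintype V] (G : SimpleGraph V) (𝒞 : Finset V)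
    (den : Finset V → ℝ)
    (hden : ∀ S : Finset V,
      den S = ((G.edgeFinset.filter fun e => ∀ v ∈ e, v ∈ S).card : ℝ) / S.card)
    (c₀ : G.ConnectedComponent)
    (hc₀ : c₀.supp = (𝒞 : Set V))
    (hc₀cyc : Nonempty (G.induce c₀.supp ≃g cycleGraph 4))
    (huniq : ∀ c : G.ConnectedComponent,
      Nonempty (G.induce c.supp ≃g cycleGraph 4) → c = c₀)
    (hother : ∀ c : G.ConnectedComponent, c ≠ c₀ →
      Nonempty (G.induce c.supp ≃g pathGraph 2) ∨
      Nonempty (G.induce c.supp ≃g pathGraph 4)) :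
    den 𝒞 = 1 ∧ ∀ S : Finset V, S.Nonempty → S ≠ 𝒞 → den S ≤ 7 / 8 := by
  classical
  haveI : Fintype G.ConnectedComponent :=
    Fintype.ofSurjective G.connectedComponentMk (fun c => c.exists_rep)
  -- G is triangle-free
  have htf : ∀ a b c : V, G.Adj a b → G.Adj a c → G.Adj b c → False := by
    intro a b c hab hac hbc
    have key : ∀ k : G.ConnectedComponent, a ∈ k.supp → b ∈ k.supp → c ∈ k.supp → False := by
      intro k ha hb hc
      by_cases hkc : k = c₀
      · subst hkc
        obtain ⟨φ⟩ := hc₀cyc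
        exact DensityAux.no_tri DensityAux.cyc4_tf φ ha hb hc hab hac hbc
      · rcases hother k hkc with h | h
        · obtain ⟨φ⟩ := h
          exact DensityAux.no_tri DensityAux.p2_tf φ ha hb hc hab hac hbc
        · obtain ⟨φ⟩ := h
          exact DensityAux.no_tri DensityAux.p4_tf φ ha hb hc hab hac hbc
    exact key (G.connectedComponentMk a)
      ((ConnectedComponent.mem_supp_iff _ _).mpr rfl)
      ((ConnectedComponent.mem_supp_iff _ _).mpr (ConnectedComponent.sound hab.symm.reachable))
      ((ConnectedComponent.mem_supp_iff _ _).mpr (ConnectedComponent.sound hac.symm.reachable))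
  -- the 4-cycle facts
  have h𝒞fE : (G.edgeFinset.filter fun e => ∀ v ∈ e, v ∈ 𝒞).card = 4 := by
    obtain ⟨φ⟩ := hc₀cyc
    rw [DensityAux.fE_induce c₀.supp (fun v => by rw [hc₀]; exact Iff.rfl),
      φ.card_edgeFinset_eq, DensityAux.cyc4_edges]
  have h𝒞card : 𝒞.card = 4 := by
    obtain ⟨φ⟩ := hc₀cyc
    have h1 : Nat.card c₀.supp = 4 := by
      rw [Nat.card_congr φ.toEquiv]; simp
    rw [hc₀] at h1
    rwa [Nat.card_coe_set_eq, Set.ncard_coe_finset] at h1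
  -- the per-component bound for non-cycle components
  have hcomp : ∀ c : G.ConnectedComponent, ∀ T : Finset V,
      (∀ v ∈ T, G.connectedComponentMk v = c) → c ≠ c₀ →
      4 * (G.edgeFinset.filter fun e => ∀ v ∈ e, v ∈ T).card ≤ 3 * T.card := by
    intro c T hTc hne
    have hsub : ∀ v ∈ T, v ∈ c.supp :=
      fun v hv => (ConnectedComponent.mem_supp_iff c v).mpr (hTc v hv)
    have hcardle : ∀ n : ℕ, Nat.card c.supp = n → T.card ≤ n := by
      intro n hn
      calc T.card = (T : Set V).ncard := (Set.ncard_coe_finset T).symm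
        _ ≤ (c.supp).ncard := Set.ncard_le_ncard (fun v hv => hsub v hv) (Set.toFinite _)
        _ = n := by rw [← Nat.card_coe_set_eq, hn]
    rcases hother c hne with hiso | hiso
    · obtain ⟨φ⟩ := hiso
      have hn : Nat.card c.supp = 2 := by rw [Nat.card_congr φ.toEquiv]; simp
      have hcard := hcardle 2 hn
      exact DensityAux.bound34 htf (by omega) (fun h => absurd h (by omega))
    · obtain ⟨φ⟩ := hiso
      have hn : Nat.card c.supp = 4 := by rw [Nat.card_congr φ.toEquiv]; simp
      have hcard := hcardle 4 hn
      apply DensityAux.bound34 htf hcard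
      intro h4
      have hTeq : T = (c.supp).toFinset := by
        apply Finset.eq_of_subset_of_card_le
        · intro v hv; rw [Set.mem_toFinset]; exact hsub v hv
        · rw [Set.toFinset_card, ← Nat.card_eq_fintype_card, hn, h4]
      rw [hTeq, DensityAux.fE_induce c.supp (fun v => Set.mem_toFinset), φ.card_edgeFinset_eq, DensityAux.p4_edges]
  constructor
  · rw [hden, h𝒞fE, h𝒞card]
    norm_num
  intro S hS hSne
  rw [hden]
  set T : G.ConnectedComponent → Finset V :=
    fun c => S.filter (fun v => G.connectedComponentMk v = c) with hTdef
  have hcards : S.card = ∑ c, (T c).card :=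
    Finset.card_eq_sum_card_fiberwise (fun x _ => Finset.mem_univ _)
  have hsplit : (G.edgeFinset.filter fun e => ∀ v ∈ e, v ∈ S) =
      Finset.univ.biUnion (fun c => G.edgeFinset.filter fun e => ∀ v ∈ e, v ∈ T c) := by
    ext e
    simp only [Finset.mem_biUnion, Finset.mem_filter, Finset.mem_univ, true_and]
    constructor
    · rintro ⟨he, hv⟩
      induction e using Sym2.ind with
      | _ x y =>
        have hadj : G.Adj x y := (SimpleGraph.mem_edgeSet G).mp (mem_edgeFinset.mp he)
        refine ⟨G.connectedComponentMk x, he, ?_⟩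
        intro v hv'
        rw [Sym2.mem_iff] at hv'
        rcases hv' with rfl | rfl
        · exact Finset.mem_filter.mpr ⟨hv v (Sym2.mem_mk_left v y), rfl⟩
        · exact Finset.mem_filter.mpr ⟨hv v (Sym2.mem_mk_right x v),
            ConnectedComponent.sound hadj.symm.reachable⟩
    · rintro ⟨c, he, hv⟩
      exact ⟨he, fun v hv' => (Finset.mem_filter.mp (hv v hv')).1⟩
  have hedges : (G.edgeFinset.filter fun e => ∀ v ∈ e, v ∈ S).card =
      ∑ c, (G.edgeFinset.filter fun e => ∀ v ∈ e, v ∈ T c).card := by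
    rw [hsplit]
    apply Finset.card_biUnion
    intro c1 _ c2 _ hne
    simp only [Function.onFun]; rw [Finset.disjoint_left]
    intro e he1 he2
    rw [Finset.mem_filter] at he1 he2
    induction e using Sym2.ind with
    | _ x y =>
      have h1 := (Finset.mem_filter.mp (he1.2 x (Sym2.mem_mk_left x y))).2
      have h2 := (Finset.mem_filter.mp (he2.2 x (Sym2.mem_mk_left x y))).2
      exact hne (h1.symm.trans h2)
  have hTc : ∀ c, ∀ v ∈ T c, G.connectedComponentMk v = c :=
    fun c v hv => (Finset.mem_filter.mp hv).2
  have hsumb : 4 * ∑ c ∈ Finset.univ.erase c₀,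
      (G.edgeFinset.filter fun e => ∀ v ∈ e, v ∈ T c).card ≤
      3 * ∑ c ∈ Finset.univ.erase c₀, (T c).card := by
    rw [Finset.mul_sum, Finset.mul_sum]
    exact Finset.sum_le_sum fun c hc => hcomp c _ (hTc c) (Finset.ne_of_mem_erase hc)
  rw [← Finset.add_sum_erase _ _ (Finset.mem_univ c₀)] at hcards hedges
  have hpos : (0 : ℝ) < (S.card : ℝ) := by
    exact_mod_cast Finset.card_pos.mpr hS
  have h8 : 8 * (G.edgeFinset.filter fun e => ∀ v ∈ e, v ∈ S).card ≤ 7 * S.card := by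
    by_cases hful : T c₀ = 𝒞
    · have h𝒞S : 𝒞 ⊆ S := by
        intro v hv
        rw [← hful] at hv
        exact (Finset.mem_filter.mp hv).1
      have hss : 𝒞 ⊂ S := lt_of_le_of_ne h𝒞S (fun h => hSne h.symm)
      have hS5 : 4 < S.card := by
        have := Finset.card_lt_card hss
        omega
      have he0 : (G.edgeFinset.filter fun e => ∀ v ∈ e, v ∈ T c₀).card = 4 := by
        rw [hful]; exact h𝒞fE
      have hk0 : (T c₀).card = 4 := by rw [hful]; exact h𝒞card
      have h4F : 4 * (G.edgeFinset.filter fun e => ∀ v ∈ e, v ∈ S).card ≤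
          3 * S.card + 4 := by omega
      exact DensityAux.arith _ _ h4F (by omega)
    · have hb0 : 4 * (G.edgeFinset.filter fun e => ∀ v ∈ e, v ∈ T c₀).card ≤
          3 * (T c₀).card := by
        obtain ⟨φ⟩ := hc₀cyc
        have hsub : ∀ v ∈ T c₀, v ∈ (𝒞 : Finset V) := by
          intro v hv
          have h1 : v ∈ c₀.supp :=
            (ConnectedComponent.mem_supp_iff c₀ v).mpr (hTc c₀ v hv)
          rw [hc₀] at h1
          exact h1
        have hcard : (T c₀).card ≤ 4 := by
          calc (T c₀).card ≤ 𝒞.card := Finset.card_le_card hsub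
            _ = 4 := h𝒞card
        apply DensityAux.bound34 htf hcard
        intro h4
        exfalso
        exact hful (Finset.eq_of_subset_of_card_le hsub (by omega))
      omega
  rw [div_le_iff₀ hpos]
  have hcast := (Nat.cast_le (α := ℝ)).mpr h8
  push_cast at hcast
  linarith
end
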